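/- Let g : ℝⁿ → ℝ be continuously differentiable with ‖∇g(x)‖ > 0 whenever g(x) ≠ 0, let α > 0, and let x : [0, ∞) → ℝⁿ solve the ODE ẋ(t) = −(∇f(x(t)) + λ(x(t))∇g(x(t))) where λ(x) = (−⟨∇g(x), ∇f(x)⟩ + α g(x))/‖∇g(x)‖². Then g(x(t)) = e^{−αt} g(x(0)) for all t ≥ 0. -/

import Mathlib

open RealInnerProductSpace

/-- Exponential decay of the constraint function along the Euclidean
constraint controlled gradient flow. -/
theorem ccgf_constraint_decay {n : ℕ}
    (f g : EuclideanSpace ℝ (Fin n) → ℝ)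
    (hf : ContDiff ℝ 1 f) (hg : ContDiff ℝ 1 g)
    (hg' : ∀ y, g y ≠ 0 → gradient g y ≠ 0)
    (α : ℝ) (hα : 0 < α)
    (x : ℝ → EuclideanSpace ℝ (Fin n))
    (hx : ∀ t, 0 ≤ t →
      HasDerivAt x
        (-(gradient f (x t) +
          ((-(⟪gradient g (x t), gradient f (x t)⟫) + α * g (x t)) /
              ‖gradient g (x t)‖ ^ 2) • gradient g (x t))) t) :
    ∀ t, 0 ≤ t → g (x t) = Real.exp (-α * t) * g (x 0) := by
  -- h(t) = g (x t) satisfies h' = -α h on [0, ∞)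
  have hdiffg : ∀ y, DifferentiableAt ℝ g y := fun y =>
    (hg.differentiable one_ne_zero).differentiableAt
  have key : ∀ t, 0 ≤ t → HasDerivAt (fun s => g (x s)) (-α * g (x t)) t := by
    intro t ht
    have hgrad : HasGradientAt g (gradient g (x t)) (x t) := (hdiffg (x t)).hasGradientAt
    have hcomp := hgrad.hasFDerivAt.comp_hasDerivAt t (hx t ht)
    refine hcomp.congr_deriv ?_
    rw [InnerProductSpace.toDual_apply_apply]
    by_cases h0 : gradient g (x t) = 0
    · have hgz : g (x t) = 0 := by
        by_contra hne
        exact hg' _ hne h0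
      simp [h0, hgz]
    · have hn : ‖gradient g (x t)‖ ^ 2 ≠ 0 := pow_ne_zero _ (norm_ne_zero_iff.mpr h0)
      rw [inner_neg_right, inner_add_right, real_inner_smul_right,
        real_inner_self_eq_norm_sq]
      field_simp
      ring
  intro t ht
  -- Consider φ(s) = exp(α s) * g (x s); its right derivative is 0 on [0, t]
  set φ : ℝ → ℝ := fun s => Real.exp (α * s) * g (x s) with hφ
  have hφderiv : ∀ s ∈ Set.Ico (0:ℝ) t, HasDerivWithinAt φ 0 (Set.Ici s) s := by
    intro s hs
    have h1 : HasDerivAt (fun u => Real.exp (α * u)) (α * Real.exp (α * s)) s := by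
      have := (Real.hasDerivAt_exp (α * s)).comp s ((hasDerivAt_id s).const_mul α)
      exact this.congr_deriv (by ring)
    have h2 := key s hs.1
    have := h1.mul h2
    have h3 : α * Real.exp (α * s) * g (x s) + Real.exp (α * s) * (-α * g (x s)) = 0 := by
      ring
    rw [h3] at this
    exact this.hasDerivWithinAt
  have hφcont : ContinuousOn φ (Set.Icc 0 t) := by
    intro s hs
    exact ((Real.continuous_exp.comp (continuous_const.mul continuous_id)).continuousAt.mul
      ((hg.continuous.continuousAt).comp (hx s hs.1).continuousAt)).continuousWithinAt
  have := constant_of_has_deriv_right_zero hφcont hφderiv t (Set.right_mem_Icc.mpr ht)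
  have hval : Real.exp (α * t) * g (x t) = Real.exp (α * 0) * g (x 0) := this
  have : g (x t) = Real.exp (-(α * t)) * g (x 0) := by
    rw [Real.exp_neg]
    field_simp at hval ⊢
    simpa [mul_comm] using hval
  simpa [neg_mul] using this
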